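/- Let Ω ⊆ ℝ^d be a bounded open set equipped with a Gauss–Green partition Ω_1, …, Ω_N with boundary measures σ_i and outward unit normals n_i. Let L : ℝ^d × ℝ × ℝ^d → ℝ be twice continuously differentiable, let u : Ω → ℝ be continuous with u restricted to each Ω_i extending to a C² function on cl(Ω_i) (a broken extremal), and let ξ ∈ C¹(cl(Ω); ℝ^d) and φ ∈ C¹(cl(Ω)). Assume: (i) u satisfies the Euler–Lagrange equation −div(L_p(·,u,∇u)) + L_u(·,u,∇u) = 0 at every point of each Ω_i; and (ii) (piecewise variational symmetry) the infinitesimal invariance identity ∇Q · L_p(·,u,∇u) + Q L_u(·,u,∇u) + div(L(·,u,∇u) ξ) = 0, with Q := φ − ξ·∇u, holds at every point of each Ω_i. Then Σ_{i=1}^N [ ∫_{∂Ω_i} ( φ L_p(·,u,∇u) · n_i + L(·,u,∇u) ξ · n_i ) dσ_i − ∫_{Ω_i} ( L_p(·,u,∇u) · ∇(ξ·∇u) + (ξ·∇u) L_u(·,u,∇u) ) dx ] = 0. -/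

import Mathlib

open MeasureTheory RealInnerProductSpace
open scoped BigOperators

noncomputable section

/-- `ℝ^d` as a Euclidean (inner product) space. -/
abbrev Euc (d : ℕ) := EuclideanSpace ℝ (Fin d)

/-- Divergence of a vector field on `ℝ^d`. -/
noncomputable def pdiv {d : ℕ} (F : Euc d → Euc d) (x : Euc d) : ℝ :=
  ∑ i, fderiv ℝ F x (EuclideanSpace.single i 1) i

/-- `x ↦ L(x, u(x), ∇u(x))`, the Lagrangian evaluated along `u`. -/
noncomputable def lagAlong {d : ℕ} (L : Euc d → ℝ → Euc d → ℝ) (u : Euc d → ℝ)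
    (x : Euc d) : ℝ :=
  L x (u x) (gradient u x)

/-- `L_u(x, u(x), ∇u(x))`, the partial derivative of `L` in its second argument
evaluated along `u`. -/
noncomputable def lagU {d : ℕ} (L : Euc d → ℝ → Euc d → ℝ) (u : Euc d → ℝ)
    (x : Euc d) : ℝ :=
  deriv (fun s => L x s (gradient u x)) (u x)

/-- `L_p(x, u(x), ∇u(x))`, the gradient of `L` in its third argument
evaluated along `u`. -/
noncomputable def lagP {d : ℕ} (L : Euc d → ℝ → Euc d → ℝ) (u : Euc d → ℝ)
    (x : Euc d) : Euc d :=
  gradient (fun p => L x (u x) p) (gradient u x)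

/-- A Gauss–Green partition of a bounded open set `Ω ⊆ ℝ^d`: finitely many pairwise
disjoint open pieces whose closures cover `cl(Ω)`, each equipped with a finite Borel
boundary measure `σ i` supported on `∂(piece i)` and an outward unit normal field,
such that the Gauss–Green (divergence) theorem holds on each piece for `C¹` vector
fields. -/
structure GGPartition (d : ℕ) (Ω : Set (Euc d)) (N : ℕ) where
  piece : Fin N → Set (Euc d)
  isOpen_piece : ∀ i, IsOpen (piece i)
  disjoint_piece : ∀ i j, i ≠ j → Disjoint (piece i) (piece j)
  cover : (⋃ i, closure (piece i)) = closure Ω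
  σ : Fin N → Measure (Euc d)
  σ_finite : ∀ i, IsFiniteMeasure (σ i)
  σ_support : ∀ i, σ i ((frontier (piece i))ᶜ) = 0
  normal : Fin N → Euc d → Euc d
  normal_meas : ∀ i, Measurable (normal i)
  normal_bdd : ∀ i x, ‖normal i x‖ ≤ 1
  normal_unit : ∀ i, ∀ x ∈ frontier (piece i), ‖normal i x‖ = 1
  gauss_green : ∀ i (F : Euc d → Euc d), ContDiff ℝ 1 F →
    ∫ x in piece i, pdiv F x = ∫ x, ⟪F x, normal i x⟫ ∂(σ i)

/-! ### Auxiliary lemmas -/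

lemma grad_inner' {d : ℕ} (f : Euc d → ℝ) (x v : Euc d) :
    ⟪gradient f x, v⟫ = fderiv ℝ f x v := by simp [gradient]

lemma inner_eq_sum' {d : ℕ} (a b : Euc d) : ⟪a, b⟫ = ∑ i, a i * b i := by
  simp [PiLp.inner_apply, RCLike.inner_apply, conj_trivial]
  exact Finset.sum_congr rfl (fun _ _ => mul_comm _ _)

lemma pdiv_add' {d : ℕ} {F G : Euc d → Euc d} {x : Euc d}
    (hF : DifferentiableAt ℝ F x) (hG : DifferentiableAt ℝ G x) :
    pdiv (fun y => F y + G y) x = pdiv F x + pdiv G x := by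
  unfold pdiv
  rw [fderiv_fun_add hF hG]
  simp [Finset.sum_add_distrib]

lemma pdiv_smul' {d : ℕ} {c : Euc d → ℝ} {V : Euc d → Euc d} {x : Euc d}
    (hc : DifferentiableAt ℝ c x) (hV : DifferentiableAt ℝ V x) :
    pdiv (fun y => c y • V y) x = ⟪gradient c x, V x⟫ + c x * pdiv V x := by
  unfold pdiv
  rw [fderiv_fun_smul hc hV]
  have h1 : ∀ i : Fin d, gradient c x i = fderiv ℝ c x (EuclideanSpace.single i 1) := by
    intro i
    rw [← grad_inner']
    rw [EuclideanSpace.inner_single_right]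
    simp
  simp only [ContinuousLinearMap.add_apply, ContinuousLinearMap.smul_apply,
    ContinuousLinearMap.smulRight_apply, PiLp.add_apply, PiLp.smul_apply, smul_eq_mul,
    Finset.sum_add_distrib, Finset.mul_sum]
  rw [inner_eq_sum']
  simp only [h1]
  ring_nf

lemma gradient_sub' {d : ℕ} {f g : Euc d → ℝ} {x : Euc d}
    (hf : DifferentiableAt ℝ f x) (hg : DifferentiableAt ℝ g x) :
    gradient (fun y => f y - g y) x = gradient f x - gradient g x := by
  unfold gradient
  rw [fderiv_fun_sub hf hg, map_sub]

noncomputable def inR (d : ℕ) : Euc d →L[ℝ] Euc d × ℝ × Euc d :=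
  (0 : Euc d →L[ℝ] Euc d).prod ((0 : Euc d →L[ℝ] ℝ).prod (ContinuousLinearMap.id ℝ (Euc d)))

lemma contDiff_gradient' {d : ℕ} {f : Euc d → ℝ} (hf : ContDiff ℝ 2 f) :
    ContDiff ℝ 1 (fun x => gradient f x) := by
  have : (fun x => gradient f x)
      = fun x => (InnerProductSpace.toDual ℝ (Euc d)).symm (fderiv ℝ f x) := rfl
  rw [this]
  exact (InnerProductSpace.toDual ℝ (Euc d)).symm.contDiff.comp
    (hf.fderiv_right (by norm_num))

lemma fderiv_third {d : ℕ} {L : Euc d → ℝ → Euc d → ℝ}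
    (hL : Differentiable ℝ (fun q : Euc d × ℝ × Euc d => L q.1 q.2.1 q.2.2))
    (x : Euc d) (s : ℝ) (p0 : Euc d) :
    fderiv ℝ (fun p => L x s p) p0
      = (fderiv ℝ (fun q : Euc d × ℝ × Euc d => L q.1 q.2.1 q.2.2) (x, s, p0)).comp (inR d) := by
  have htriple : HasFDerivAt (fun p : Euc d => ((x, s, p) : Euc d × ℝ × Euc d)) (inR d) p0 :=
    (hasFDerivAt_const x p0).prodMk ((hasFDerivAt_const s p0).prodMk (hasFDerivAt_id p0))
  exact (((hL (x, s, p0)).hasFDerivAt).comp p0 htriple).fderiv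

lemma contDiff_lagP {d : ℕ} {L : Euc d → ℝ → Euc d → ℝ}
    (hL : ContDiff ℝ 2 (fun q : Euc d × ℝ × Euc d => L q.1 q.2.1 q.2.2))
    {v : Euc d → ℝ} (hv : ContDiff ℝ 2 v) :
    ContDiff ℝ 1 (lagP L v) := by
  have key : lagP L v = fun x => (InnerProductSpace.toDual ℝ (Euc d)).symm
      (((ContinuousLinearMap.compL ℝ (Euc d) (Euc d × ℝ × Euc d) ℝ).flip (inR d))
        (fderiv ℝ (fun q : Euc d × ℝ × Euc d => L q.1 q.2.1 q.2.2) (x, v x, gradient v x))) := by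
    funext x
    unfold lagP
    unfold gradient
    congr 1
    simp only [ContinuousLinearMap.flip_apply, ContinuousLinearMap.compL_apply]
    exact fderiv_third (hL.differentiable (by norm_num)) x (v x) (gradient v x)
  rw [key]
  have htr : ContDiff ℝ 1 (fun x => ((x, v x, gradient v x) : Euc d × ℝ × Euc d)) :=
    contDiff_id.prodMk ((hv.of_le (by norm_num)).prodMk (contDiff_gradient' hv))
  exact (InnerProductSpace.toDual ℝ (Euc d)).symm.contDiff.comp
    ((((ContinuousLinearMap.compL ℝ (Euc d) (Euc d × ℝ × Euc d) ℝ).flip (inR d)).contDiff).comp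
      ((hL.fderiv_right (by norm_num)).comp htr))

lemma contDiff_lagAlong {d : ℕ} {L : Euc d → ℝ → Euc d → ℝ}
    (hL : ContDiff ℝ 2 (fun q : Euc d × ℝ × Euc d => L q.1 q.2.1 q.2.2))
    {v : Euc d → ℝ} (hv : ContDiff ℝ 2 v) :
    ContDiff ℝ 1 (lagAlong L v) := by
  have htr : ContDiff ℝ 1 (fun x => ((x, v x, gradient v x) : Euc d × ℝ × Euc d)) :=
    contDiff_id.prodMk ((hv.of_le (by norm_num)).prodMk (contDiff_gradient' hv))
  exact (hL.of_le one_le_two).comp htr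

/-- conserved quantities for broken extremals: if `u` is a broken
extremal (continuous, piecewise `C²` over a Gauss–Green partition of `Ω`) satisfying
the Euler–Lagrange equation on each piece, and the problem has a piecewise variational
symmetry with infinitesimals `ξ, φ`, then the sum of per-piece boundary terms and
bulk transport terms vanishes. -/
theorem noether_broken_extremals {d N : ℕ} (Ω : Set (Euc d))
    (hΩo : IsOpen Ω) (hΩb : Bornology.IsBounded Ω)
    (T : GGPartition d Ω N)
    (L : Euc d → ℝ → Euc d → ℝ)
    (hL : ContDiff ℝ 2 (fun q : Euc d × ℝ × Euc d => L q.1 q.2.1 q.2.2))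
    (u : Euc d → ℝ) (hu : ContinuousOn u Ω)
    (uext : Fin N → Euc d → ℝ) (huext : ∀ i, ContDiff ℝ 2 (uext i))
    (hagree : ∀ i, ∀ x ∈ T.piece i, u x = uext i x)
    (ξ : Euc d → Euc d) (hξ : ContDiff ℝ 1 ξ)
    (φ : Euc d → ℝ) (hφ : ContDiff ℝ 1 φ)
    (hEL : ∀ i, ∀ x ∈ T.piece i,
      -(pdiv (lagP L (uext i)) x) + lagU L (uext i) x = 0)
    (hinv : ∀ i, ∀ x ∈ T.piece i,
      ⟪gradient (fun y => φ y - ⟪ξ y, gradient (uext i) y⟫) x, lagP L (uext i) x⟫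
        + (φ x - ⟪ξ x, gradient (uext i) x⟫) * lagU L (uext i) x
        + pdiv (fun y => lagAlong L (uext i) y • ξ y) x = 0) :
    ∑ i, ((∫ x, (φ x * ⟪lagP L (uext i) x, T.normal i x⟫
            + lagAlong L (uext i) x * ⟪ξ x, T.normal i x⟫) ∂(T.σ i))
      - ∫ x in T.piece i,
          (⟪lagP L (uext i) x, gradient (fun y => ⟪ξ y, gradient (uext i) y⟫) x⟫
            + ⟪ξ x, gradient (uext i) x⟫ * lagU L (uext i) x)) = 0 := by
  apply Finset.sum_eq_zero
  intro i _
  set v := uext i with hv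
  have hvC : ContDiff ℝ 2 v := huext i
  set P := lagP L v with hP
  set Λ := lagAlong L v with hΛ
  set W : Euc d → ℝ := fun y => ⟪ξ y, gradient v y⟫ with hW
  have hPc : ContDiff ℝ 1 P := contDiff_lagP hL hvC
  have hΛc : ContDiff ℝ 1 Λ := contDiff_lagAlong hL hvC
  have hWc : ContDiff ℝ 1 W := hξ.inner ℝ (contDiff_gradient' hvC)
  set F : Euc d → Euc d := fun x => φ x • P x + Λ x • ξ x with hF
  have hFc : ContDiff ℝ 1 F := (hφ.smul hPc).add (hΛc.smul hξ)
  have hGG := T.gauss_green i F hFc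
  -- boundary integrand
  have hbdy : (∫ x, (φ x * ⟪P x, T.normal i x⟫ + Λ x * ⟪ξ x, T.normal i x⟫) ∂(T.σ i))
      = ∫ x, ⟪F x, T.normal i x⟫ ∂(T.σ i) := by
    congr 1
    funext x
    simp only [hF, inner_add_left, real_inner_smul_left]
  -- bulk integrand
  have hbulk : (∫ x in T.piece i, (⟪P x, gradient W x⟫ + W x * lagU L v x))
      = ∫ x in T.piece i, pdiv F x := by
    apply setIntegral_congr_fun (T.isOpen_piece i).measurableSet
    intro x hx
    have hφd : DifferentiableAt ℝ φ x := (hφ.differentiable one_ne_zero) x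
    have hPd : DifferentiableAt ℝ P x := (hPc.differentiable one_ne_zero) x
    have hΛd : DifferentiableAt ℝ Λ x := (hΛc.differentiable one_ne_zero) x
    have hξd : DifferentiableAt ℝ ξ x := (hξ.differentiable one_ne_zero) x
    have hWd : DifferentiableAt ℝ W x := (hWc.differentiable one_ne_zero) x
    have h1 : pdiv F x = pdiv (fun y => φ y • P y) x + pdiv (fun y => Λ y • ξ y) x :=
      pdiv_add' (hφd.smul hPd) (hΛd.smul hξd)
    have h2 : pdiv (fun y => φ y • P y) x = ⟪gradient φ x, P x⟫ + φ x * pdiv P x :=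
      pdiv_smul' hφd hPd
    have hELx := hEL i x hx
    have hinvx := hinv i x hx
    have hgradsub : gradient (fun y => φ y - W y) x = gradient φ x - gradient W x :=
      gradient_sub' hφd hWd
    rw [← hv] at hELx hinvx
    rw [hgradsub, inner_sub_left] at hinvx
    have hELx' : -pdiv P x + lagU L v x = 0 := hELx
    have hinvx' : ⟪gradient φ x, P x⟫ - ⟪gradient W x, P x⟫
        + (φ x - W x) * lagU L v x + pdiv (fun y => Λ y • ξ y) x = 0 := hinvx
    have hcomm : ⟪P x, gradient W x⟫ = ⟪gradient W x, P x⟫ := real_inner_comm _ _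
    show ⟪P x, gradient W x⟫ + W x * lagU L v x = _
    rw [h1, h2, hcomm]
    have hPU : pdiv P x = lagU L v x := by linarith
    rw [hPU, sub_mul] at *
    linarith [hinvx']
  rw [hbdy, hbulk, ← hGG]
  ring
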